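/- If G ∈ F_{q^h}^{r×n} generates (as F_q-row span) an additive code of minimum distance d, write G = Σ_{i=1}^h G_i e_i over an F_q-basis {e_1,...,e_h} of F_{q^h}, and for each point c = (c_1,...,c_h) of PG(h-1,q) set Ĝ_c = Σ c_i G_i. Then for every u ∈ F_q^r, if uG has Hamming weight w, the concatenated vector (uĜ_c)_{c ∈ PG(h-1,q)} has Hamming weight w·q^{h-1}. -/

import Mathlib

section Aux
open Projectivization Finset

lemma count_ker (q h : ℕ) (Fq : Type) [Field Fq] [Fintype Fq] [DecidableEq Fq]
    (hq : Fintype.card Fq = q) (v : Fin h → Fq) (hv : v ≠ 0) :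
    (univ.filter (fun w : Fin h → Fq => ∑ l, w l * v l = 0)).card = q ^ (h - 1) := by
  classical
  obtain ⟨l0, hl0⟩ : ∃ l, v l ≠ 0 := by
    by_contra hc; push_neg at hc; exact hv (funext hc)
  set φ : (Fin h → Fq) →ₗ[Fq] Fq :=
    { toFun := fun w => ∑ l, w l * v l
      map_add' := by intro a b; simp [add_mul, Finset.sum_add_distrib]
      map_smul' := by intro c a; simp [Finset.mul_sum, mul_assoc] } with hφ
  have hsurj : LinearMap.range φ = ⊤ := by
    rw [LinearMap.range_eq_top]
    intro c
    refine ⟨Pi.single l0 (c * (v l0)⁻¹), ?_⟩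
    simp only [hφ, LinearMap.coe_mk, AddHom.coe_mk]
    rw [Finset.sum_eq_single l0]
    · simp [mul_assoc, inv_mul_cancel₀ hl0]
    · intro b _ hb; simp [Pi.single_eq_of_ne hb]
    · simp
  have hrank : Module.finrank Fq ↥(LinearMap.ker φ) = h - 1 := by
    have := LinearMap.finrank_range_add_finrank_ker φ
    rw [hsurj] at this
    simp [Module.finrank_fin_fun] at this
    omega
  haveI : Fintype ↥(LinearMap.ker φ) := Fintype.ofFinite _
  have hcard : Fintype.card ↥(LinearMap.ker φ) = q ^ (h - 1) := by
    rw [Module.card_fintype (Module.finBasis Fq ↥(LinearMap.ker φ))]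
    simp [hrank, hq]
  rw [← hcard]
  rw [← Fintype.card_subtype]
  exact Fintype.card_congr (Equiv.subtypeEquivRight (fun w => by
    simp [LinearMap.mem_ker, hφ]))

lemma count_points (q h : ℕ) (Fq : Type) [Field Fq] [Fintype Fq] [DecidableEq Fq]
    (hq : Fintype.card Fq = q) [Fintype (Projectivization Fq (Fin h → Fq))]
    (v : Fin h → Fq) (hv : v ≠ 0) :
    (univ.filter (fun P : Projectivization Fq (Fin h → Fq) => ∑ l, P.rep l * v l ≠ 0)).card
      = q ^ (h - 1) := by
  classical
  have hq2 : 2 ≤ q := hq ▸ Fintype.one_lt_card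
  have hh : 1 ≤ h := by
    obtain ⟨l, -⟩ : ∃ l, v l ≠ 0 := by
      by_contra hc; push_neg at hc; exact hv (funext hc)
    have := l.2; omega
  set S : Finset (Fin h → Fq) := univ.filter (fun w => ∑ l, w l * v l ≠ 0) with hS
  set T : Finset (Projectivization Fq (Fin h → Fq)) :=
    univ.filter (fun P => ∑ l, P.rep l * v l ≠ 0) with hT
  have hScard : S.card = q ^ (h - 1) * (q - 1) := by
    have h1 : (univ.filter (fun w : Fin h → Fq => ∑ l, w l * v l = 0)).card + S.card
        = Fintype.card (Fin h → Fq) := by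
      rw [hS, Finset.card_filter_add_card_filter_not, Finset.card_univ]
    rw [count_ker q h Fq hq v hv] at h1
    have h2 : Fintype.card (Fin h → Fq) = q ^ h := by
      simp [Fintype.card_fun, hq]
    have h3 : q ^ h = q ^ (h - 1) * q := by
      rw [← pow_succ]; congr 1; omega
    rw [h2, h3] at h1
    have h4 : q ^ (h-1) * (q - 1) = q ^ (h-1) * q - q ^ (h-1) := by
      rw [Nat.mul_sub, mul_one]
    rw [h4]; omega
  set f : (Fin h → Fq) → Projectivization Fq (Fin h → Fq) :=
    fun w => if hw : w = 0 then Projectivization.mk Fq v hv else Projectivization.mk Fq w hw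
    with hf
  have hsum : ∀ (a : Fq) (w : Fin h → Fq), ∑ l, (a • w) l * v l = a * ∑ l, w l * v l := by
    intro a w
    simp [Finset.mul_sum, mul_assoc]
  have hne : ∀ w ∈ S, w ≠ 0 := by
    intro w hw
    rw [hS, Finset.mem_filter] at hw
    rintro rfl
    exact hw.2 (by simp)
  have hmem : ∀ w ∈ S, f w ∈ T := by
    intro w hw
    have hw0 := hne w hw
    rw [hS, Finset.mem_filter] at hw
    rw [hT, Finset.mem_filter]
    refine ⟨Finset.mem_univ _, ?_⟩
    have hfw : f w = Projectivization.mk Fq w hw0 := by simp only [hf]; rw [dif_neg hw0]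
    rw [hfw]
    obtain ⟨a, ha⟩ := (Projectivization.mk_eq_mk_iff Fq _ _
      (Projectivization.rep_nonzero _) hw0).mp (Projectivization.mk_rep _)
    rw [Units.smul_def] at ha
    rw [← ha, hsum]
    exact mul_ne_zero (Units.ne_zero a) hw.2
  have hfiber : ∀ P ∈ T, (S.filter (fun w => f w = P)).card = q - 1 := by
    intro P hP
    rw [hT, Finset.mem_filter] at hP
    have hPr := Projectivization.rep_nonzero P
    have himg : S.filter (fun w => f w = P)
        = Finset.image (fun t : Fqˣ => (t : Fq) • P.rep) univ := by
      ext w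
      simp only [Finset.mem_filter, Finset.mem_image, Finset.mem_univ, true_and]
      constructor
      · rintro ⟨hwS, hfw⟩
        have hw0 := hne w hwS
        simp only [hf] at hfw; rw [dif_neg hw0] at hfw
        rw [← Projectivization.mk_rep P] at hfw
        obtain ⟨a, ha⟩ := (Projectivization.mk_eq_mk_iff Fq _ _ hw0
          (Projectivization.rep_nonzero _)).mp hfw
        exact ⟨a, by rw [← Units.smul_def, ha]⟩
      · rintro ⟨t, rfl⟩
        have hw0 : (t : Fq) • P.rep ≠ 0 := smul_ne_zero (Units.ne_zero t) hPr
        refine ⟨?_, ?_⟩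
        · rw [hS, Finset.mem_filter]
          refine ⟨Finset.mem_univ _, ?_⟩
          rw [hsum]
          exact mul_ne_zero (Units.ne_zero t) hP.2
        · simp only [hf]; rw [dif_neg hw0]
          rw [(Projectivization.mk_eq_mk_iff Fq _ _ hw0 hPr).mpr ⟨t, rfl⟩,
            Projectivization.mk_rep]
    rw [himg, Finset.card_image_of_injective _ ?_, Finset.card_univ, Fintype.card_units, hq]
    intro t s hts
    simp only [Units.smul_def] at hts
    exact Units.ext (smul_left_injective Fq hPr hts)
  have hsum2 : S.card = T.card * (q - 1) := by
    rw [Finset.card_eq_sum_card_fiberwise hmem, Finset.sum_congr rfl hfiber,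
      Finset.sum_const, smul_eq_mul]
  rw [hScard] at hsum2
  exact Nat.eq_of_mul_eq_mul_right (by omega) hsum2.symm

end Aux


open Projectivization in
/-- Expansion of codeword weights: if `G = ∑ᵢ Gᵢeᵢ` over an `F_q`-basis `e` of `F_{q^h}`, and
for each point `c` of `PG(h-1,q)` we set `Ĝ_c = ∑ᵢ cᵢGᵢ`, then for every `u ∈ F_q^r`, if `uG`
has Hamming weight `w`, the concatenated vector `(uĜ_c)_c` has Hamming weight `w·q^{h-1}`. -/
theorem additive_code_concatenation_weight
    (q h r n : ℕ) (Fq K : Type) [Field Fq] [Fintype Fq] [DecidableEq Fq]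
    [Field K] [Fintype K] [DecidableEq K] [Algebra Fq K]
    (hq : Fintype.card Fq = q) (hK : Fintype.card K = q ^ h) (hh : 1 ≤ h)
    [Fintype (Projectivization Fq (Fin h → Fq))]
    (G : Matrix (Fin r) (Fin n) K) (e : Module.Basis (Fin h) Fq K)
    (Gc : Fin h → Matrix (Fin r) (Fin n) Fq)
    (hG : ∀ i j, G i j = ∑ l : Fin h, Gc l i j • e l) :
    ∀ u : Fin r → Fq,
      hammingNorm (fun x : Projectivization Fq (Fin h → Fq) × Fin n =>
          Matrix.vecMul u (∑ l : Fin h, x.1.rep l • Gc l) x.2)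
        = hammingNorm (fun j => ∑ i, u i • G i j) * q ^ (h - 1) := by
  intro u
  classical
  set v : Fin n → Fin h → Fq := fun j l => ∑ i, u i * Gc l i j with hv
  have key : ∀ (c : Projectivization Fq (Fin h → Fq)) (j : Fin n),
      Matrix.vecMul u (∑ l, c.rep l • Gc l) j = ∑ l, c.rep l * v j l := by
    intro c j
    simp only [Matrix.vecMul, dotProduct, Matrix.sum_apply, Matrix.smul_apply,
      smul_eq_mul, hv]
    simp only [Finset.mul_sum]
    rw [Finset.sum_comm]
    exact Finset.sum_congr rfl fun l _ => Finset.sum_congr rfl fun i _ => by ring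
  have keyB : ∀ j, (∑ i, u i • G i j) = e.equivFun.symm (v j) := by
    intro j
    rw [Module.Basis.equivFun_symm_apply]
    simp only [hG, Finset.smul_sum, smul_smul]
    rw [Finset.sum_comm]
    refine Finset.sum_congr rfl fun l _ => ?_
    rw [← Finset.sum_smul]
  have hRHS : hammingNorm (fun j => ∑ i, u i • G i j)
      = (Finset.univ.filter (fun j : Fin n => v j ≠ 0)).card := by
    unfold hammingNorm
    congr 1
    ext j
    simp only [Finset.mem_filter, keyB]
    constructor
    · rintro ⟨h1, h2⟩; exact ⟨h1, fun hc => h2 (by rw [hc]; simp)⟩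
    · rintro ⟨h1, h2⟩; exact ⟨h1, fun hc => h2 (by
        simpa using e.equivFun.symm.injective (by rw [hc]; simp))⟩
  have hLHS : hammingNorm (fun x : Projectivization Fq (Fin h → Fq) × Fin n =>
      Matrix.vecMul u (∑ l : Fin h, x.1.rep l • Gc l) x.2)
      = ∑ j : Fin n, (Finset.univ.filter
          (fun c : Projectivization Fq (Fin h → Fq) => ∑ l, c.rep l * v j l ≠ 0)).card := by
    unfold hammingNorm
    rw [Finset.card_filter, Fintype.sum_prod_type_right]
    simp only [key]
    refine Finset.sum_congr rfl fun j _ => ?_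
    rw [Finset.card_filter]
  rw [hLHS, hRHS]
  have : ∀ j : Fin n, (Finset.univ.filter
      (fun c : Projectivization Fq (Fin h → Fq) => ∑ l, c.rep l * v j l ≠ 0)).card
      = if v j ≠ 0 then q ^ (h - 1) else 0 := by
    intro j
    by_cases hvj : v j = 0
    · simp [hvj]
    · rw [if_pos hvj, count_points q h Fq hq (v j) hvj]
  rw [Finset.sum_congr rfl fun j _ => this j]
  rw [Finset.sum_ite, Finset.sum_const, Finset.sum_const_zero, add_zero, smul_eq_mul]
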